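/- For each a > 0 there exist ε₀ > 0 and a continuous function v : [0, ε₀] → ℝ with v(0) = 0, v(t)/t → a as t → 0⁺, v twice differentiable on (0, ε₀] with v''(t) + h(t) f(v(t)) = 0 for all t ∈ (0, ε₀], and (a/2) t ≤ v(t) ≤ (3a/2) t on [0, ε₀]. Moreover v is the unique such function on [0, ε₀] obtained as the fixed point v = t w of the map T(w)(t) = a - (1/t) ∫₀ᵗ ∫₀ˢ h(x)( (x w(x))^{-q} + g₁(x w(x)) ) dx ds on {w ∈ C[0, ε₀] : w(0) = a, ‖w - a‖_∞ ≤ a/2}. -/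

import Mathlib

open Real Set Filter MeasureTheory Topology

set_option maxHeartbeats 1000000

lemma aux_int_rpow {r : ℝ} (hr : -1 < r) {s : ℝ} (hs : 0 ≤ s) :
    IntegrableOn (fun x : ℝ => x ^ r) (Ioo 0 s) volume ∧
    ∫ x in Ioo (0:ℝ) s, x ^ r = s ^ (r+1) / (r+1) := by
  constructor
  · have h1 := intervalIntegral.intervalIntegrable_rpow' (a := 0) (b := s) hr
    rw [intervalIntegrable_iff_integrableOn_Ioc_of_le hs] at h1
    exact h1.mono_set Ioo_subset_Ioc_self
  · rw [← integral_Ioc_eq_integral_Ioo, ← intervalIntegral.integral_of_le hs,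
      integral_rpow (Or.inl hr), Real.zero_rpow (by linarith)]
    ring

lemma aux_bound {φ : ℝ → ℝ} {C r s : ℝ} (hr : -1 < r) (hs : 0 ≤ s)
    (hmeas : AEStronglyMeasurable φ (volume.restrict (Ioo 0 s)))
    (hb : ∀ x ∈ Ioo (0:ℝ) s, |φ x| ≤ C * x ^ r) :
    IntegrableOn φ (Ioo 0 s) volume ∧
      |∫ x in Ioo (0:ℝ) s, φ x| ≤ C * s ^ (r+1) / (r+1) := by
  obtain ⟨hint, hval⟩ := aux_int_rpow hr hs
  have hint' : IntegrableOn (fun x : ℝ => C * x ^ r) (Ioo 0 s) volume := hint.const_mul C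
  have hb' : ∀ᵐ x ∂(volume.restrict (Ioo 0 s)), ‖φ x‖ ≤ C * x ^ r := by
    rw [ae_restrict_iff' measurableSet_Ioo]
    exact Eventually.of_forall fun x hx => hb x hx
  have hφint : IntegrableOn φ (Ioo 0 s) volume := Integrable.mono' hint' hmeas hb'
  refine ⟨hφint, ?_⟩
  calc |∫ x in Ioo (0:ℝ) s, φ x| ≤ ∫ x in Ioo (0:ℝ) s, C * x ^ r :=
        norm_integral_le_of_norm_le hint' hb'
    _ = C * (s ^ (r+1) / (r+1)) := by rw [integral_const_mul, hval]
    _ = C * s ^ (r+1) / (r+1) := by ring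

lemma aux_rpow_lip {m y z q : ℝ} (hq : 0 < q) (hm : 0 < m) (hy : m ≤ y) (hz : m ≤ z) :
    |y ^ (-q) - z ^ (-q)| ≤ q * m ^ (-q-1) * |y - z| := by
  have hdiff : ∀ x ∈ Ici m, DifferentiableAt ℝ (fun x : ℝ => x ^ (-q)) x := fun x hx =>
    (Real.hasDerivAt_rpow_const (p := -q)
      (Or.inl (ne_of_gt (lt_of_lt_of_le hm hx)))).differentiableAt
  have hbound : ∀ x ∈ Ici m, ‖deriv (fun x : ℝ => x ^ (-q)) x‖ ≤ q * m ^ (-q-1) := by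
    intro x hx
    have hx0 : x ≠ 0 := ne_of_gt (lt_of_lt_of_le hm hx)
    rw [Real.deriv_rpow_const x (-q)]
    rw [Real.norm_eq_abs, abs_mul, abs_neg, abs_of_pos hq,
      abs_of_pos (Real.rpow_pos_of_pos (lt_of_lt_of_le hm hx) _)]
    have : x ^ (-q-1) ≤ m ^ (-q-1) :=
      Real.rpow_le_rpow_of_nonpos hm hx (by linarith)
    nlinarith [Real.rpow_pos_of_pos hm (-q-1)]
  have := (convex_Ici m).norm_image_sub_le_of_norm_deriv_le hdiff hbound hz hy
  simpa [Real.norm_eq_abs] using this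

theorem stmt_6
    (N : ℕ) (hN : 2 < N)
    (R R₁ : ℝ) (hR : 0 < R) (hR₁ : R₁ = R ^ ((2 : ℝ) - N))
    (f g g₁ : ℝ → ℝ) (p q : ℝ) (hp : 1 < p) (hq0 : 0 < q) (hq1 : q < 1)
    (hodd : ∀ u : ℝ, f (-u) = - f u)
    (hfloclip : ∀ x : ℝ, x ≠ 0 → ∃ ε > (0 : ℝ), ∃ L : NNReal, LipschitzOnWith L f (Metric.ball x ε))
    (hH1 : ∀ u : ℝ, u ≠ 0 → f u = |u| ^ (p - 1) * u + g u)
    (hglim : ∀ ε : ℝ, 0 < ε → ∃ M : ℝ, 0 < M ∧ ∀ u : ℝ, M ≤ |u| → |g u / |u| ^ p| ≤ ε)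
    (hH2 : ∀ u : ℝ, u ≠ 0 → f u = u / |u| ^ (q + 1) + g₁ u)
    (hg1lip : LocallyLipschitz g₁) (hg10 : g₁ 0 = 0)
    (hfpos : ∀ w : ℝ, 0 < w → 0 < f w)
    (K : ℝ → ℝ) (K₀ K₁ α : ℝ) (hK₀ : 0 < K₀) (hK₁ : 0 < K₁)
    (hα₁ : (N : ℝ) + q * ((N : ℝ) - 2) < α) (hα₂ : α < 2 * ((N : ℝ) - 1))
    (hKpos : ∀ r : ℝ, R ≤ r → 0 < K r)
    (hKdiff : ∀ r : ℝ, R ≤ r → DifferentiableAt ℝ K r)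
    (hK'cont : ContinuousOn (deriv K) (Ici R))
    (hKlb : ∀ r : ℝ, R ≤ r → K₀ * r ^ (-α) ≤ K r)
    (hKub : ∀ r : ℝ, R ≤ r → K r ≤ K₁ * r ^ (-α))
    (hKratio : ∀ r : ℝ, R ≤ r → -(r * deriv K r / K r) < 2 * ((N : ℝ) - 1))
    (hKlim : Tendsto (fun r => r * deriv K r / K r) atTop (nhds (-α)))
    (h : ℝ → ℝ)
    (hh : ∀ t : ℝ, t ∈ Ioc (0 : ℝ) R₁ →
      h t = t ^ (2 * ((N : ℝ) - 1) / (2 - (N : ℝ))) * K (t ^ (1 / (2 - (N : ℝ)))) / ((N : ℝ) - 2) ^ 2)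
    :
    ∀ a : ℝ, 0 < a → ∃ ε₀ : ℝ, 0 < ε₀ ∧ ε₀ ≤ R₁ ∧ ∃ vv : ℝ → ℝ,
      ContinuousOn vv (Icc 0 ε₀) ∧ vv 0 = 0 ∧
      Tendsto (fun t => vv t / t) (nhdsWithin 0 (Ioi 0)) (nhds a) ∧
      (∀ t ∈ Ioc (0 : ℝ) ε₀, DifferentiableAt ℝ vv t ∧ DifferentiableAt ℝ (deriv vv) t ∧
        deriv (deriv vv) t + h t * f (vv t) = 0) ∧
      (∀ t ∈ Icc (0 : ℝ) ε₀, a / 2 * t ≤ vv t ∧ vv t ≤ 3 * a / 2 * t) ∧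
      ∃ w : ℝ → ℝ,
        (ContinuousOn w (Icc 0 ε₀) ∧ w 0 = a ∧
        (∀ t ∈ Icc (0 : ℝ) ε₀, |w t - a| ≤ a / 2) ∧
        (∀ t ∈ Ioc (0 : ℝ) ε₀, w t = a - (1 / t) *
          ∫ s in Ioo (0 : ℝ) t, ∫ x in Ioo (0 : ℝ) s,
            h x * ((x * w x) ^ (-q) + g₁ (x * w x)))) ∧
        (∀ w' : ℝ → ℝ,
          (ContinuousOn w' (Icc 0 ε₀) ∧ w' 0 = a ∧
            (∀ t ∈ Icc (0 : ℝ) ε₀, |w' t - a| ≤ a / 2) ∧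
            (∀ t ∈ Ioc (0 : ℝ) ε₀, w' t = a - (1 / t) *
              ∫ s in Ioo (0 : ℝ) t, ∫ x in Ioo (0 : ℝ) s,
                h x * ((x * w' x) ^ (-q) + g₁ (x * w' x)))) →
          ∀ t ∈ Icc (0 : ℝ) ε₀, w' t = w t) ∧
        (∀ t ∈ Icc (0 : ℝ) ε₀, vv t = t * w t) := by
  intro a ha
  have hN2 : (2:ℝ) < (N:ℝ) := by exact_mod_cast hN
  have hNR : (0:ℝ) < (N:ℝ) - 2 := by linarith
  have h2N : (2:ℝ) - (N:ℝ) ≠ 0 := by intro hc; linarith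
  have hR₁pos : 0 < R₁ := hR₁ ▸ Real.rpow_pos_of_pos hR _
  set c₁ : ℝ := K₁ / ((N:ℝ)-2)^2 with hc₁def
  have hc₁ : 0 < c₁ := by positivity
  set γ : ℝ := (α - 2*((N:ℝ)-1))/((N:ℝ)-2) with hγdef
  have hγq : -1 < γ - q := by
    have h1 : q - 1 < γ := by
      rw [hγdef, lt_div_iff₀ hNR]; nlinarith
    linarith
  set μ : ℝ := γ - q + 1 with hμdef
  have hμ : 0 < μ := by rw [hμdef]; linarith
  -- bound on h
  have hhub : ∀ x ∈ Ioc (0:ℝ) R₁, 0 < h x ∧ h x ≤ c₁ * x ^ γ := by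
    intro x hx
    have hx0 : 0 < x := hx.1
    have hrR : R ≤ x ^ (1/(2-(N:ℝ))) := by
      have hexp : 1/(2-(N:ℝ)) ≤ 0 := by
        apply div_nonpos_of_nonneg_of_nonpos (by norm_num); linarith
      have h1 : R₁ ^ (1/(2-(N:ℝ))) ≤ x ^ (1/(2-(N:ℝ))) :=
        Real.rpow_le_rpow_of_nonpos hx0 hx.2 hexp
      have h2 : R₁ ^ (1/(2-(N:ℝ))) = R := by
        rw [hR₁, ← Real.rpow_mul hR.le, mul_one_div, div_self h2N, Real.rpow_one]
      linarith
    have hKr := hKub _ hrR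
    have hKrpos := hKpos _ hrR
    have hhx := hh x hx
    constructor
    · rw [hhx]
      have h3 : (0:ℝ) < x ^ (2 * ((N:ℝ) - 1) / (2 - (N:ℝ))) := Real.rpow_pos_of_pos hx0 _
      have h4 : (0:ℝ) < ((N:ℝ)-2)^2 := by positivity
      positivity
    · rw [hhx]
      have hbb : (x ^ (1/(2-(N:ℝ)))) ^ (-α) = x ^ (α/((N:ℝ)-2)) := by
        rw [← Real.rpow_mul hx0.le]
        congr 1
        field_simp
        ring
      have hKr' : K (x ^ (1/(2-(N:ℝ)))) ≤ K₁ * x ^ (α/((N:ℝ)-2)) := by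
        rw [← hbb]; exact hKr
      have hpow : x ^ (2 * ((N:ℝ) - 1) / (2 - (N:ℝ))) * x ^ (α/((N:ℝ)-2)) = x ^ γ := by
        rw [← Real.rpow_add hx0]
        congr 1
        rw [hγdef]
        field_simp
        ring
      calc x ^ (2 * ((N:ℝ) - 1) / (2 - (N:ℝ))) * K (x ^ (1/(2-(N:ℝ)))) / ((N:ℝ) - 2) ^ 2
          ≤ x ^ (2 * ((N:ℝ) - 1) / (2 - (N:ℝ))) * (K₁ * x ^ (α/((N:ℝ)-2))) / ((N:ℝ) - 2) ^ 2 := by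
            have h3 : (0:ℝ) ≤ x ^ (2 * ((N:ℝ) - 1) / (2 - (N:ℝ))) := (Real.rpow_pos_of_pos hx0 _).le
            gcongr
        _ = c₁ * x ^ γ := by rw [hc₁def, ← hpow]; ring
  -- g₁ Lipschitz data near 0
  obtain ⟨Lg, s0, hs0, hg1l⟩ := hg1lip 0
  obtain ⟨r₀, hr₀, hball⟩ := Metric.mem_nhds_iff.mp hs0
  set L : ℝ := (Lg:ℝ) with hLdef
  have hL0 : 0 ≤ L := Lg.coe_nonneg
  have hg1d : ∀ y z : ℝ, |y| < r₀ → |z| < r₀ → |g₁ y - g₁ z| ≤ L * |y - z| := by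
    intro y z hy hz
    have hmy : y ∈ s0 := hball (by simpa [Metric.mem_ball, Real.dist_eq] using hy)
    have hmz : z ∈ s0 := hball (by simpa [Metric.mem_ball, Real.dist_eq] using hz)
    have := hg1l.dist_le_mul y hmy z hmz
    simpa [Real.dist_eq] using this
  have hg1b : ∀ y : ℝ, |y| < r₀ → |g₁ y| ≤ L * |y| := by
    intro y hy
    have := hg1d y 0 hy (by simpa using hr₀)
    simpa [hg10] using this
  -- choice of η
  set η : ℝ := min R₁ (r₀ / (2*a)) with hηdef
  have hηpos : 0 < η := lt_min hR₁pos (by positivity)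
  have hηR₁ : η ≤ R₁ := min_le_left _ _
  have hηr₀ : ∀ x v : ℝ, 0 ≤ x → x ≤ η → 0 ≤ v → v ≤ 3*a/2 → |x * v| < r₀ := by
    intro x v hx hxη hv hv2
    have hxr : x ≤ r₀/(2*a) := le_trans hxη (min_le_right _ _)
    rw [abs_of_nonneg (by positivity)]
    have h1 : x * v ≤ (r₀/(2*a)) * (3*a/2) := mul_le_mul hxr hv2 hv (by positivity)
    have h2 : (r₀/(2*a)) * (3*a/2) = 3/4 * r₀ := by field_simp; ring
    linarith
  -- constants
  set C : ℝ := c₁ * ((a/2) ^ (-q) + L * (3*a/2) * η ^ (1+q)) with hCdef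
  have hCpos : 0 < C := by
    have h1 : (0:ℝ) < (a/2) ^ (-q) := Real.rpow_pos_of_pos (by positivity) _
    have h2 : (0:ℝ) ≤ L * (3*a/2) * η ^ (1+q) := by
      have : (0:ℝ) ≤ η ^ (1+q) := (Real.rpow_pos_of_pos hηpos _).le
      positivity
    rw [hCdef]; positivity
  set C' : ℝ := c₁ * (q * (a/2) ^ (-q-1) + L * η ^ (1+q)) with hC'def
  have hC'pos : 0 < C' := by
    have h1 : (0:ℝ) < (a/2) ^ (-q-1) := Real.rpow_pos_of_pos (by positivity) _
    have h2 : (0:ℝ) ≤ L * η ^ (1+q) := by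
      have : (0:ℝ) ≤ η ^ (1+q) := (Real.rpow_pos_of_pos hηpos _).le
      positivity
    rw [hC'def]; positivity
  -- choice of ε₀
  have htend : Tendsto (fun t : ℝ => t ^ μ) (𝓝[>] (0:ℝ)) (𝓝 0) := by
    have h0 : ContinuousAt (fun t : ℝ => t ^ μ) 0 :=
      Real.continuousAt_rpow_const 0 μ (Or.inr hμ.le)
    have h1 : Tendsto (fun t : ℝ => t ^ μ) (𝓝[>] (0:ℝ)) (𝓝 ((0:ℝ) ^ μ)) :=
      h0.tendsto.mono_left nhdsWithin_le_nhds
    simpa [Real.zero_rpow (ne_of_gt hμ)] using h1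
  have hev1 : ∀ᶠ t in 𝓝[>] (0:ℝ), C * t ^ μ / (μ*(μ+1)) < a/2 := by
    have ht : Tendsto (fun t : ℝ => C * t ^ μ / (μ*(μ+1))) (𝓝[>] (0:ℝ)) (𝓝 0) := by
      have := (htend.const_mul C).div_const (μ*(μ+1))
      simpa using this
    exact ht.eventually_lt_const (by positivity)
  have hev2 : ∀ᶠ t in 𝓝[>] (0:ℝ), C' * t ^ μ / (μ*(μ+1)) < 1/2 := by
    have ht : Tendsto (fun t : ℝ => C' * t ^ μ / (μ*(μ+1))) (𝓝[>] (0:ℝ)) (𝓝 0) := by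
      have := (htend.const_mul C').div_const (μ*(μ+1))
      simpa using this
    exact ht.eventually_lt_const (by norm_num)
  have hev3 : ∀ᶠ t in 𝓝[>] (0:ℝ), t < η :=
    eventually_nhdsWithin_of_eventually_nhds (Filter.Tendsto.eventually_lt_const hηpos tendsto_id)
  have hev4 : ∀ᶠ t in 𝓝[>] (0:ℝ), (0:ℝ) < t :=
    eventually_mem_nhdsWithin
  obtain ⟨ε₀, hεall⟩ := (((hev1.and hev2).and hev3).and hev4).exists
  obtain ⟨⟨⟨hε1, hε2⟩, hεη⟩, hεpos⟩ := hεall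
  have hε₀η : ε₀ < η := hεη
  have hε₀pos : 0 < ε₀ := hεpos
  have hε₀R₁ : ε₀ ≤ R₁ := le_trans hε₀η.le hηR₁
  have hmono : ∀ t ∈ Ioc (0:ℝ) ε₀,
      C * t ^ μ / (μ*(μ+1)) ≤ a/2 ∧ C' * t ^ μ / (μ*(μ+1)) ≤ 1/2 := by
    intro t ht
    have h1 : t ^ μ ≤ ε₀ ^ μ := Real.rpow_le_rpow ht.1.le ht.2 hμ.le
    constructor
    · calc C * t ^ μ / (μ*(μ+1)) ≤ C * ε₀ ^ μ / (μ*(μ+1)) := by gcongr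
        _ ≤ a/2 := hε1.le
    · calc C' * t ^ μ / (μ*(μ+1)) ≤ C' * ε₀ ^ μ / (μ*(μ+1)) := by gcongr
        _ ≤ 1/2 := hε2.le
  -- definitions
  set Gf : (ℝ → ℝ) → ℝ → ℝ := fun w x => h x * ((x * w x) ^ (-q) + g₁ (x * w x)) with hGfdef
  set Ff : (ℝ → ℝ) → ℝ → ℝ := fun w s => ∫ x in Ioo (0:ℝ) s, Gf w x with hFfdef
  set If : (ℝ → ℝ) → ℝ → ℝ := fun w t => ∫ s in Ioo (0:ℝ) t, Ff w s with hIfdef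
  have hrRle : ∀ x : ℝ, 0 < x → x ≤ R₁ → R ≤ x ^ (1/(2-(N:ℝ))) := by
    intro x hx0 hxR
    have hexp : 1/(2-(N:ℝ)) ≤ 0 := by
      apply div_nonpos_of_nonneg_of_nonpos (by norm_num); linarith
    have h1 : R₁ ^ (1/(2-(N:ℝ))) ≤ x ^ (1/(2-(N:ℝ))) :=
      Real.rpow_le_rpow_of_nonpos hx0 hxR hexp
    have h2 : R₁ ^ (1/(2-(N:ℝ))) = R := by
      rw [hR₁, ← Real.rpow_mul hR.le, mul_one_div, div_self h2N, Real.rpow_one]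
    linarith
  have hhcont : ContinuousOn h (Ioo (0:ℝ) η) := by
    have hform : ContinuousOn (fun t : ℝ =>
        t ^ (2 * ((N:ℝ) - 1) / (2 - (N:ℝ))) * K (t ^ (1 / (2 - (N:ℝ)))) / ((N:ℝ) - 2) ^ 2)
        (Ioo 0 η) := by
      apply ContinuousOn.div_const
      apply ContinuousOn.mul
      · apply ContinuousOn.rpow_const continuousOn_id
        intro x hx; exact Or.inl (ne_of_gt hx.1)
      · intro x hx
        have hx0 : 0 < x := hx.1
        have hrR : R ≤ x ^ (1/(2-(N:ℝ))) := hrRle x hx0 (le_trans hx.2.le hηR₁)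
        apply ContinuousAt.continuousWithinAt
        exact ContinuousAt.comp ((hKdiff _ hrR).continuousAt)
          (Real.continuousAt_rpow_const x _ (Or.inl (ne_of_gt hx0)))
    exact ContinuousOn.congr hform (fun t ht => hh t ⟨ht.1, le_trans ht.2.le hηR₁⟩)
  have hxpow : ∀ x : ℝ, 0 < x → x ≤ η → x ≤ η ^ (1+q) * x ^ (-q) := by
    intro x hx hxη
    have h1 : x ^ (1+q) ≤ η ^ (1+q) := Real.rpow_le_rpow hx.le hxη (by linarith)
    have h2 : x ^ (1+q) * x ^ (-q) = x := by
      rw [← Real.rpow_add hx]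
      norm_num
    calc x = x ^ (1+q) * x ^ (-q) := h2.symm
      _ ≤ η ^ (1+q) * x ^ (-q) :=
        mul_le_mul_of_nonneg_right h1 (Real.rpow_nonneg hx.le _)
  -- basic facts on Gf for admissible w
  have mainG : ∀ w : ℝ → ℝ, Continuous w →
      (∀ x ∈ Icc (0:ℝ) η, a/2 ≤ w x ∧ w x ≤ 3*a/2) →
      ContinuousOn (Gf w) (Ioo 0 η) ∧
      (∀ x ∈ Ioo (0:ℝ) η, |Gf w x| ≤ C * x ^ (γ-q)) := by
    intro w hwc hwb
    have hpos : ∀ x ∈ Ioo (0:ℝ) η, 0 < x * w x := fun x hx =>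
      mul_pos hx.1 (lt_of_lt_of_le (by positivity) (hwb x ⟨hx.1.le, hx.2.le⟩).1)
    constructor
    · apply ContinuousOn.mul hhcont
      apply ContinuousOn.add
      · apply ContinuousOn.rpow_const (continuous_id.mul hwc).continuousOn
        exact fun x hx => Or.inl (ne_of_gt (hpos x hx))
      · exact ((hg1lip.continuous).comp (continuous_id.mul hwc)).continuousOn
    · intro x hx
      obtain ⟨hwb1, hwb2⟩ := hwb x ⟨hx.1.le, hx.2.le⟩
      have hx0 : 0 < x := hx.1
      have hhb := hhub x ⟨hx0, le_trans hx.2.le hηR₁⟩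
      have hP1 : (x * w x) ^ (-q) ≤ (a/2) ^ (-q) * x ^ (-q) := by
        have h1 : (x * (a/2)) ^ (-q) = x ^ (-q) * (a/2) ^ (-q) :=
          Real.mul_rpow hx0.le (by positivity)
        have h2 : (x * w x) ^ (-q) ≤ (x * (a/2)) ^ (-q) :=
          Real.rpow_le_rpow_of_nonpos (by positivity)
            (mul_le_mul_of_nonneg_left hwb1 hx0.le) (by linarith)
        rw [h1] at h2; linarith
      have hP2 : |g₁ (x * w x)| ≤ L * (3*a/2) * η ^ (1+q) * x ^ (-q) := by
        have hb1 : |g₁ (x * w x)| ≤ L * |x * w x| :=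
          hg1b _ (hηr₀ x (w x) hx0.le hx.2.le (by linarith [hwb1]; ) hwb2)
        have hb2 : |x * w x| = x * w x := abs_of_pos (hpos x hx)
        have hb3 : x * w x ≤ x * (3*a/2) := mul_le_mul_of_nonneg_left hwb2 hx0.le
        have hb4 : x ≤ η ^ (1+q) * x ^ (-q) := hxpow x hx0 hx.2.le
        have hL3 : (0:ℝ) ≤ L * (3*a/2) := by positivity
        calc |g₁ (x * w x)| ≤ L * (x * w x) := by rw [hb2] at hb1; exact hb1
          _ ≤ L * (x * (3*a/2)) := mul_le_mul_of_nonneg_left hb3 hL0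
          _ = L * (3*a/2) * x := by ring
          _ ≤ L * (3*a/2) * (η ^ (1+q) * x ^ (-q)) := mul_le_mul_of_nonneg_left hb4 hL3
          _ = L * (3*a/2) * η ^ (1+q) * x ^ (-q) := by ring
      have hP1pos : (0:ℝ) < (x * w x) ^ (-q) := Real.rpow_pos_of_pos (hpos x hx) _
      have hEX : x ^ γ * x ^ (-q) = x ^ (γ-q) := by
        rw [← Real.rpow_add hx0]; ring_nf
      have hxq : (0:ℝ) ≤ x ^ (-q) := Real.rpow_nonneg hx0.le _
      have hxγ : (0:ℝ) ≤ x ^ γ := Real.rpow_nonneg hx0.le _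
      calc |Gf w x| = h x * |(x * w x) ^ (-q) + g₁ (x * w x)| := by
            simp only [hGfdef]
            rw [abs_mul, abs_of_pos hhb.1]
        _ ≤ h x * ((x * w x) ^ (-q) + |g₁ (x * w x)|) := by
            apply mul_le_mul_of_nonneg_left _ hhb.1.le
            calc |(x * w x) ^ (-q) + g₁ (x * w x)| ≤ |(x * w x) ^ (-q)| + |g₁ (x * w x)| :=
                  abs_add_le _ _
              _ = (x * w x) ^ (-q) + |g₁ (x * w x)| := by rw [abs_of_pos hP1pos]
        _ ≤ (c₁ * x ^ γ) * ((a/2) ^ (-q) * x ^ (-q) + L * (3*a/2) * η ^ (1+q) * x ^ (-q)) := by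
            apply mul_le_mul hhb.2 (by linarith) (by positivity) (by positivity)
        _ = C * (x ^ γ * x ^ (-q)) := by rw [hCdef]; ring
        _ = C * x ^ (γ-q) := by rw [hEX]
  -- integrability and first bound
  have intF : ∀ w : ℝ → ℝ, Continuous w →
      (∀ x ∈ Icc (0:ℝ) η, a/2 ≤ w x ∧ w x ≤ 3*a/2) →
      ∀ s : ℝ, 0 ≤ s → s ≤ η →
      IntegrableOn (Gf w) (Ioo 0 s) volume ∧ |Ff w s| ≤ C * s ^ μ / μ := by
    intro w hwc hwb s hs hsη
    obtain ⟨hGc, hGb⟩ := mainG w hwc hwb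
    have hsub : Ioo (0:ℝ) s ⊆ Ioo (0:ℝ) η := Ioo_subset_Ioo_right hsη
    have hmeas : AEStronglyMeasurable (Gf w) (volume.restrict (Ioo 0 s)) :=
      (hGc.mono hsub).aestronglyMeasurable measurableSet_Ioo
    have hb : ∀ x ∈ Ioo (0:ℝ) s, |Gf w x| ≤ C * x ^ (γ-q) := fun x hx => hGb x (hsub hx)
    obtain ⟨h1, h2⟩ := aux_bound hγq hs hmeas hb
    refine ⟨h1, ?_⟩
    have : γ - q + 1 = μ := hμdef.symm
    rw [this] at h2
    simpa only [hFfdef] using h2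
  -- continuity / integrability of primitives, and FTC
  have pack : ∀ w : ℝ → ℝ, Continuous w →
      (∀ x ∈ Icc (0:ℝ) η, a/2 ≤ w x ∧ w x ≤ 3*a/2) →
      ContinuousOn (Ff w) (Icc 0 η) ∧ IntegrableOn (Ff w) (Icc 0 η) volume ∧
      (∀ t : ℝ, 0 ≤ t → t ≤ η → |If w t| ≤ C * t ^ (μ+1) / (μ*(μ+1))) ∧
      ContinuousOn (If w) (Icc 0 η) ∧
      (∀ t ∈ Ioo (0:ℝ) η, HasDerivAt (Ff w) (Gf w t) t ∧ HasDerivAt (If w) (Ff w t) t) := by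
    intro w hwc hwb
    obtain ⟨hGc, hGb⟩ := mainG w hwc hwb
    have hGI : IntegrableOn (Gf w) (Ioo 0 η) volume := (intF w hwc hwb η hηpos.le le_rfl).1
    have hGintIcc : IntegrableOn (Gf w) (Icc 0 η) volume := by
      rw [integrableOn_Icc_iff_integrableOn_Ioo]; exact hGI
    have hFc : ContinuousOn (Ff w) (Icc 0 η) := by
      have hprim := intervalIntegral.continuousOn_primitive (f := Gf w) (μ := volume) (a := 0) (b := η) hGintIcc
      exact ContinuousOn.congr hprim (fun s _ => by
        simp only [hFfdef]
        exact integral_Ioc_eq_integral_Ioo.symm)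
    have hFint : IntegrableOn (Ff w) (Icc 0 η) volume :=
      hFc.integrableOn_compact isCompact_Icc
    have hIb : ∀ t : ℝ, 0 ≤ t → t ≤ η → |If w t| ≤ C * t ^ (μ+1) / (μ*(μ+1)) := by
      intro t ht htη
      have hmeasF : AEStronglyMeasurable (Ff w) (volume.restrict (Ioo 0 t)) :=
        (hFc.mono (subset_trans Ioo_subset_Icc_self (Icc_subset_Icc_right htη))).aestronglyMeasurable
          measurableSet_Ioo
      have hbF : ∀ s ∈ Ioo (0:ℝ) t, |Ff w s| ≤ (C/μ) * s ^ μ := by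
        intro s hs
        have h1 := (intF w hwc hwb s hs.1.le (le_trans hs.2.le htη)).2
        have h2 : C * s ^ μ / μ = (C/μ) * s ^ μ := by ring
        linarith [h2 ▸ h1]
      obtain ⟨hIint, hIb'⟩ := aux_bound (by linarith : (-1:ℝ) < μ) ht hmeasF hbF
      have heq : C/μ * t ^ (μ+1)/(μ+1) = C * t ^ (μ+1)/(μ*(μ+1)) := by
        field_simp
      calc |If w t| = |∫ s in Ioo (0:ℝ) t, Ff w s| := by simp only [hIfdef]
        _ ≤ C/μ * t ^ (μ+1)/(μ+1) := hIb'
        _ = C * t ^ (μ+1)/(μ*(μ+1)) := heq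
    have hIc : ContinuousOn (If w) (Icc 0 η) := by
      have hprim := intervalIntegral.continuousOn_primitive (f := Ff w) (μ := volume) (a := 0) (b := η) hFint
      exact ContinuousOn.congr hprim (fun s _ => by
        simp only [hIfdef]
        exact integral_Ioc_eq_integral_Ioo.symm)
    refine ⟨hFc, hFint, hIb, hIc, ?_⟩
    intro t ht
    have hFd : HasDerivAt (Ff w) (Gf w t) t := by
      have hJF : HasDerivAt (fun u => ∫ x in (0:ℝ)..u, Gf w x) (Gf w t) t := by
        apply intervalIntegral.integral_hasDerivAt_right
        · rw [intervalIntegrable_iff_integrableOn_Ioc_of_le ht.1.le]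
          exact hGI.mono_set (fun x hx => ⟨hx.1, lt_of_le_of_lt hx.2 ht.2⟩)
        · exact ⟨Ioo 0 η, isOpen_Ioo.mem_nhds ht,
            hGc.aestronglyMeasurable measurableSet_Ioo⟩
        · exact hGc.continuousAt (isOpen_Ioo.mem_nhds ht)
      apply hJF.congr_of_eventuallyEq
      filter_upwards [isOpen_Ioo.mem_nhds ht] with s hs
      simp only [hFfdef]
      rw [intervalIntegral.integral_of_le hs.1.le, integral_Ioc_eq_integral_Ioo]
    have hId : HasDerivAt (If w) (Ff w t) t := by
      have hJI : HasDerivAt (fun u => ∫ s in (0:ℝ)..u, Ff w s) (Ff w t) t := by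
        apply intervalIntegral.integral_hasDerivAt_right
        · rw [intervalIntegrable_iff_integrableOn_Ioc_of_le ht.1.le]
          exact hFint.mono_set (fun x hx => ⟨hx.1.le, le_trans hx.2 ht.2.le⟩)
        · exact ⟨Ioo 0 η, isOpen_Ioo.mem_nhds ht,
            (hFc.mono Ioo_subset_Icc_self).aestronglyMeasurable measurableSet_Ioo⟩
        · exact hFc.continuousAt (Icc_mem_nhds ht.1 ht.2)
      apply hJI.congr_of_eventuallyEq
      filter_upwards [isOpen_Ioo.mem_nhds ht] with s hs
      simp only [hIfdef]
      rw [intervalIntegral.integral_of_le hs.1.le, integral_Ioc_eq_integral_Ioo]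
    exact ⟨hFd, hId⟩
  -- contraction estimate
  have contr : ∀ w w' : ℝ → ℝ, Continuous w → Continuous w' →
      (∀ x ∈ Icc (0:ℝ) η, a/2 ≤ w x ∧ w x ≤ 3*a/2) →
      (∀ x ∈ Icc (0:ℝ) η, a/2 ≤ w' x ∧ w' x ≤ 3*a/2) →
      ∀ D : ℝ, 0 ≤ D → (∀ x ∈ Ioo (0:ℝ) ε₀, |w x - w' x| ≤ D) →
      ∀ t ∈ Ioc (0:ℝ) ε₀, |If w t - If w' t| ≤ C' * D * t ^ (μ+1) / (μ*(μ+1)) := by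
    intro w w' hwc hw'c hwb hw'b D hD hdist t htmem
    obtain ⟨hGc, hGb⟩ := mainG w hwc hwb
    obtain ⟨hG'c, hG'b⟩ := mainG w' hw'c hw'b
    have htη : t ≤ η := le_trans htmem.2 hε₀η.le
    -- pointwise bound on the difference of the G's
    have hGd : ∀ x ∈ Ioo (0:ℝ) t, |Gf w x - Gf w' x| ≤ (C' * D) * x ^ (γ-q) := by
      intro x hx
      have hx0 : 0 < x := hx.1
      have hxε : x < ε₀ := lt_of_lt_of_le hx.2 htmem.2
      have hxη : x ≤ η := le_trans hxε.le hε₀η.le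
      obtain ⟨hwb1, hwb2⟩ := hwb x ⟨hx0.le, hxη⟩
      obtain ⟨hw'b1, hw'b2⟩ := hw'b x ⟨hx0.le, hxη⟩
      have hhb := hhub x ⟨hx0, le_trans hxη hηR₁⟩
      have hy : x * (a/2) ≤ x * w x := mul_le_mul_of_nonneg_left hwb1 hx0.le
      have hz : x * (a/2) ≤ x * w' x := mul_le_mul_of_nonneg_left hw'b1 hx0.le
      have hm : (0:ℝ) < x * (a/2) := by positivity
      have hlip := aux_rpow_lip hq0 hm hy hz
      have hmr : (x * (a/2)) ^ (-q-1) = x ^ (-q-1) * (a/2) ^ (-q-1) :=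
        Real.mul_rpow hx0.le (by positivity)
      have hyz : |x * w x - x * w' x| ≤ x * D := by
        have : x * w x - x * w' x = x * (w x - w' x) := by ring
        rw [this, abs_mul, abs_of_pos hx0]
        exact mul_le_mul_of_nonneg_left (hdist x ⟨hx0, hxε⟩) hx0.le
      have hxq1 : x ^ (-q-1) * x = x ^ (-q) := by
        nth_rewrite 2 [← Real.rpow_one x]
        rw [← Real.rpow_add hx0]; ring_nf
      have hterm1 : |(x * w x) ^ (-q) - (x * w' x) ^ (-q)| ≤
          q * (a/2) ^ (-q-1) * x ^ (-q) * D := by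
        calc |(x * w x) ^ (-q) - (x * w' x) ^ (-q)|
            ≤ q * (x * (a/2)) ^ (-q-1) * |x * w x - x * w' x| := hlip
          _ ≤ q * (x * (a/2)) ^ (-q-1) * (x * D) := by
              apply mul_le_mul_of_nonneg_left hyz
              have := Real.rpow_nonneg hm.le (-q-1)
              positivity
          _ = q * (a/2) ^ (-q-1) * (x ^ (-q-1) * x) * D := by rw [hmr]; ring
          _ = q * (a/2) ^ (-q-1) * x ^ (-q) * D := by rw [hxq1]
      have hterm2 : |g₁ (x * w x) - g₁ (x * w' x)| ≤ L * η ^ (1+q) * x ^ (-q) * D := by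
        have hb1 : |g₁ (x * w x) - g₁ (x * w' x)| ≤ L * |x * w x - x * w' x| :=
          hg1d _ _ (hηr₀ x (w x) hx0.le hxη (by linarith) hwb2)
            (hηr₀ x (w' x) hx0.le hxη (by linarith) hw'b2)
        have hb4 : x ≤ η ^ (1+q) * x ^ (-q) := hxpow x hx0 hxη
        calc |g₁ (x * w x) - g₁ (x * w' x)| ≤ L * |x * w x - x * w' x| := hb1
          _ ≤ L * (x * D) := mul_le_mul_of_nonneg_left hyz hL0
          _ ≤ L * ((η ^ (1+q) * x ^ (-q)) * D) := by
              apply mul_le_mul_of_nonneg_left _ hL0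
              exact mul_le_mul_of_nonneg_right hb4 hD
          _ = L * η ^ (1+q) * x ^ (-q) * D := by ring
      have hEX : x ^ γ * x ^ (-q) = x ^ (γ-q) := by
        rw [← Real.rpow_add hx0]; ring_nf
      calc |Gf w x - Gf w' x|
          = h x * |((x * w x) ^ (-q) - (x * w' x) ^ (-q)) + (g₁ (x * w x) - g₁ (x * w' x))| := by
            simp only [hGfdef]
            rw [show h x * ((x * w x) ^ (-q) + g₁ (x * w x)) -
                h x * ((x * w' x) ^ (-q) + g₁ (x * w' x)) =
                h x * (((x * w x) ^ (-q) - (x * w' x) ^ (-q)) +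
                  (g₁ (x * w x) - g₁ (x * w' x))) from by ring]
            rw [abs_mul, abs_of_pos hhb.1]
        _ ≤ h x * (|(x * w x) ^ (-q) - (x * w' x) ^ (-q)| + |g₁ (x * w x) - g₁ (x * w' x)|) :=
            mul_le_mul_of_nonneg_left (abs_add_le _ _) hhb.1.le
        _ ≤ (c₁ * x ^ γ) * ((q * (a/2) ^ (-q-1) * x ^ (-q) * D) + (L * η ^ (1+q) * x ^ (-q) * D)) := by
            apply mul_le_mul hhb.2 (by linarith) (by positivity) (by positivity)
        _ = (C' * D) * (x ^ γ * x ^ (-q)) := by rw [hC'def]; ring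
        _ = (C' * D) * x ^ (γ-q) := by rw [hEX]
    -- difference of the F's
    have hFd : ∀ s ∈ Ioo (0:ℝ) t, |Ff w s - Ff w' s| ≤ (C' * D / μ) * s ^ μ := by
      intro s hs
      have hsη : s ≤ η := le_trans hs.2.le htη
      have hsub : Ioo (0:ℝ) s ⊆ Ioo (0:ℝ) t := Ioo_subset_Ioo_right hs.2.le
      have hint1 := (intF w hwc hwb s hs.1.le hsη).1
      have hint2 := (intF w' hw'c hw'b s hs.1.le hsη).1
      have hdiff : Ff w s - Ff w' s = ∫ x in Ioo (0:ℝ) s, (Gf w x - Gf w' x) := by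
        simp only [hFfdef]
        rw [integral_sub hint1 hint2]
      have hmeas : AEStronglyMeasurable (fun x => Gf w x - Gf w' x)
          (volume.restrict (Ioo 0 s)) :=
        ((hGc.mono (Ioo_subset_Ioo_right hsη)).sub
          (hG'c.mono (Ioo_subset_Ioo_right hsη))).aestronglyMeasurable measurableSet_Ioo
      have hb : ∀ x ∈ Ioo (0:ℝ) s, |Gf w x - Gf w' x| ≤ (C' * D) * x ^ (γ-q) :=
        fun x hx => hGd x (hsub hx)
      obtain ⟨_, h2⟩ := aux_bound hγq hs.1.le hmeas hb
      rw [hdiff]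
      have hre : C' * D * s ^ (γ - q + 1) / (γ - q + 1) = C' * D / μ * s ^ μ := by
        rw [← hμdef]; ring
      linarith [hre ▸ h2]
    -- difference of the I's
    have hmeasF : AEStronglyMeasurable (fun s => Ff w s - Ff w' s)
        (volume.restrict (Ioo 0 t)) := by
      have h1 := ((pack w hwc hwb).1.mono
        (subset_trans Ioo_subset_Icc_self (Icc_subset_Icc_right htη)))
      have h2 := ((pack w' hw'c hw'b).1.mono
        (subset_trans Ioo_subset_Icc_self (Icc_subset_Icc_right htη)))
      exact (h1.sub h2).aestronglyMeasurable measurableSet_Ioo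
    obtain ⟨_, h2⟩ := aux_bound (by linarith : (-1:ℝ) < μ) htmem.1.le hmeasF hFd
    have hdiff : If w t - If w' t = ∫ s in Ioo (0:ℝ) t, (Ff w s - Ff w' s) := by
      simp only [hIfdef]
      rw [integral_sub]
      · exact (pack w hwc hwb).2.1.mono_set
          (subset_trans Ioo_subset_Icc_self (Icc_subset_Icc_right htη))
      · exact (pack w' hw'c hw'b).2.1.mono_set
          (subset_trans Ioo_subset_Icc_self (Icc_subset_Icc_right htη))
    rw [hdiff]
    have hre : C' * D / μ * t ^ (μ+1) / (μ+1) = C' * D * t ^ (μ+1) / (μ*(μ+1)) := by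
      field_simp
    linarith [hre ▸ h2]
  -- the operator
  set Tr : (ℝ → ℝ) → ℝ → ℝ := fun w t => a - (1/t) * If w t with hTrdef
  have hI0 : ∀ w : ℝ → ℝ, If w 0 = 0 := by
    intro w; simp only [hIfdef]; rw [Ioo_self]; simp
  have hTr0 : ∀ w : ℝ → ℝ, Tr w 0 = a := by
    intro w; simp only [hTrdef]; simp
  have hTrb : ∀ w : ℝ → ℝ, Continuous w →
      (∀ x ∈ Icc (0:ℝ) η, a/2 ≤ w x ∧ w x ≤ 3*a/2) →
      ∀ t ∈ Icc (0:ℝ) ε₀, |Tr w t - a| ≤ C * t ^ μ/(μ*(μ+1)) ∧ |Tr w t - a| ≤ a/2 := by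
    intro w hwc hwb t ht
    rcases eq_or_lt_of_le ht.1 with h0 | h0
    · rw [← h0, hTr0 w]
      simp only [sub_self, abs_zero]
      constructor
      · positivity
      · positivity
    · have htη : t ≤ η := le_trans ht.2 hε₀η.le
      have e1 : Tr w t - a = -((1/t) * If w t) := by simp only [hTrdef]; ring
      have hIb := (pack w hwc hwb).2.2.1 t h0.le htη
      have e2 : t ^ (μ+1) = t ^ μ * t := by rw [Real.rpow_add h0, Real.rpow_one]
      have key : |Tr w t - a| ≤ C * t ^ μ/(μ*(μ+1)) := by
        rw [e1, abs_neg, abs_mul, abs_of_pos (by positivity : (0:ℝ) < 1/t)]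
        calc (1/t) * |If w t| ≤ (1/t) * (C * t ^ (μ+1)/(μ*(μ+1))) := by
              apply mul_le_mul_of_nonneg_left hIb (by positivity)
          _ = C * t ^ μ/(μ*(μ+1)) := by rw [e2]; field_simp
      exact ⟨key, le_trans key (hmono t ⟨h0, ht.2⟩).1⟩
  have hTrc : ∀ w : ℝ → ℝ, Continuous w →
      (∀ x ∈ Icc (0:ℝ) η, a/2 ≤ w x ∧ w x ≤ 3*a/2) →
      ContinuousOn (Tr w) (Icc 0 ε₀) := by
    intro w hwc hwb
    intro t ht
    rcases eq_or_lt_of_le ht.1 with h0 | h0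
    · rw [← h0]
      have htd : Tendsto (fun s : ℝ => C * s ^ μ/(μ*(μ+1))) (𝓝[Icc 0 ε₀] (0:ℝ)) (𝓝 0) := by
        have hcont : ContinuousAt (fun s : ℝ => s ^ μ) 0 :=
          Real.continuousAt_rpow_const 0 μ (Or.inr hμ.le)
        have h1 : Tendsto (fun s : ℝ => C * s ^ μ/(μ*(μ+1))) (𝓝 (0:ℝ))
            (𝓝 (C * (0:ℝ) ^ μ/(μ*(μ+1)))) := ((hcont.const_smul C).div_const (μ*(μ+1))).tendsto
        have h2 : C * (0:ℝ) ^ μ/(μ*(μ+1)) = 0 := by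
          rw [Real.zero_rpow (ne_of_gt hμ)]; ring
        rw [h2] at h1
        exact h1.mono_left nhdsWithin_le_nhds
      have hsq : Tendsto (fun s => Tr w s - a) (𝓝[Icc 0 ε₀] (0:ℝ)) (𝓝 0) := by
        apply squeeze_zero_norm' _ htd
        filter_upwards [eventually_mem_nhdsWithin] with s hs
        exact (hTrb w hwc hwb s hs).1
      have : Tendsto (Tr w) (𝓝[Icc 0 ε₀] (0:ℝ)) (𝓝 a) := by
        have := hsq.add_const a
        simpa using this
      unfold ContinuousWithinAt
      rwa [hTr0 w]
    · have htIf : ContinuousWithinAt (If w) (Icc 0 ε₀) t :=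
        ((pack w hwc hwb).2.2.2.1.mono (Icc_subset_Icc_right hε₀η.le)) t ht
      have h1t : ContinuousWithinAt (fun s : ℝ => 1/s) (Icc 0 ε₀) t :=
        ((continuousAt_const.div continuousAt_id (ne_of_gt h0))).continuousWithinAt
      exact (continuousWithinAt_const.sub (h1t.mul htIf))
  -- the complete metric space and the map
  haveI : CompactSpace (Icc (0:ℝ) ε₀) := isCompact_iff_compactSpace.mp isCompact_Icc
  set ca : C(Icc (0:ℝ) ε₀, ℝ) := ContinuousMap.const _ a with hcadef
  set B : Set C(Icc (0:ℝ) ε₀, ℝ) := Metric.closedBall ca (a/2) with hBdef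
  haveI hBne : Nonempty B := ⟨⟨ca, Metric.mem_closedBall_self (by positivity)⟩⟩
  haveI : CompleteSpace B := IsClosed.completeSpace_coe (hs := Metric.isClosed_closedBall)
  set ext : C(Icc (0:ℝ) ε₀, ℝ) → ℝ → ℝ := fun W x => W (projIcc 0 ε₀ hε₀pos.le x) with hextdef
  have hex : ∀ W : C(Icc (0:ℝ) ε₀, ℝ), Continuous (ext W) :=
    fun W => W.continuous.comp continuous_projIcc
  have hexeq : ∀ (W : C(Icc (0:ℝ) ε₀, ℝ)) (x : ℝ) (hx : x ∈ Icc (0:ℝ) ε₀),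
      ext W x = W ⟨x, hx⟩ := by
    intro W x hx
    simp only [hextdef]
    rw [projIcc_of_mem]
  have hexb : ∀ W : C(Icc (0:ℝ) ε₀, ℝ), W ∈ B →
      ∀ x ∈ Icc (0:ℝ) η, a/2 ≤ ext W x ∧ ext W x ≤ 3*a/2 := by
    intro W hW x _
    have h1 : dist (W (projIcc 0 ε₀ hε₀pos.le x)) (ca (projIcc 0 ε₀ hε₀pos.le x)) ≤ dist W ca :=
      ContinuousMap.dist_apply_le_dist _
    have h2 : dist W ca ≤ a/2 := Metric.mem_closedBall.mp hW
    have h3 : ca (projIcc 0 ε₀ hε₀pos.le x) = a := rfl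
    rw [h3, Real.dist_eq] at h1
    have h4 := abs_le.mp (le_trans h1 h2)
    simp only [hextdef]
    constructor <;> linarith [h4.1, h4.2]
  have hexd : ∀ W W' : C(Icc (0:ℝ) ε₀, ℝ), ∀ x : ℝ,
      |ext W x - ext W' x| ≤ dist W W' := by
    intro W W' x
    have := ContinuousMap.dist_apply_le_dist (f := W) (g := W') (projIcc 0 ε₀ hε₀pos.le x)
    rw [Real.dist_eq] at this
    simpa only [hextdef] using this
  set Tmap : B → B := fun W =>
    ⟨⟨(Icc (0:ℝ) ε₀).restrict (Tr (ext ↑W)),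
      (hTrc (ext ↑W) (hex ↑W) (hexb ↑W W.2)).restrict⟩, by
      show _ ∈ Metric.closedBall ca (a/2)
      rw [Metric.mem_closedBall, ContinuousMap.dist_le (by positivity)]
      intro z
      have := ((hTrb (ext ↑W) (hex ↑W) (hexb ↑W W.2)) z.1 z.2).2
      rw [Real.dist_eq]; exact this⟩ with hTmapdef
  have hTlip : ∀ W W' : B, dist (Tmap W) (Tmap W') ≤ (1/2 : ℝ) * dist W W' := by
    intro W W'
    rw [Subtype.dist_eq, ContinuousMap.dist_le (by positivity)]
    intro z
    have hz := z.2
    have hD : (0:ℝ) ≤ dist (W:C(Icc (0:ℝ) ε₀, ℝ)) ↑W' := dist_nonneg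
    have happ : ∀ V : B, (Tmap V).1 z = Tr (ext ↑V) z.1 := fun V => rfl
    rw [Real.dist_eq, happ W, happ W']
    rcases eq_or_lt_of_le hz.1 with h0 | h0
    · rw [← h0, hTr0, hTr0]
      simpa using by positivity
    · have hd : ∀ x ∈ Ioo (0:ℝ) ε₀, |ext ↑W x - ext ↑W' x| ≤ dist (W:C(Icc (0:ℝ) ε₀, ℝ)) ↑W' :=
        fun x _ => hexd ↑W ↑W' x
      have hIc := contr (ext ↑W) (ext ↑W') (hex ↑W) (hex ↑W') (hexb ↑W W.2) (hexb ↑W' W'.2)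
        (dist (W:C(Icc (0:ℝ) ε₀, ℝ)) ↑W') hD hd z.1 ⟨h0, hz.2⟩
      have e1 : Tr (ext ↑W) z.1 - Tr (ext ↑W') z.1
          = -((1/z.1) * (If (ext ↑W) z.1 - If (ext ↑W') z.1)) := by
        simp only [hTrdef]; ring
      have e2 : (z.1:ℝ) ^ (μ+1) = z.1 ^ μ * z.1 := by rw [Real.rpow_add h0, Real.rpow_one]
      rw [e1, abs_neg, abs_mul, abs_of_pos (by positivity : (0:ℝ) < 1/z.1)]
      calc (1/z.1) * |If (ext ↑W) z.1 - If (ext ↑W') z.1|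
          ≤ (1/z.1) * (C' * dist (W:C(Icc (0:ℝ) ε₀, ℝ)) ↑W' * z.1 ^ (μ+1) / (μ*(μ+1))) :=
            mul_le_mul_of_nonneg_left hIc (by positivity)
        _ = (C' * z.1 ^ μ / (μ*(μ+1))) * dist (W:C(Icc (0:ℝ) ε₀, ℝ)) ↑W' := by
            rw [e2]; field_simp
        _ ≤ (1/2) * dist (W:C(Icc (0:ℝ) ε₀, ℝ)) ↑W' := by
            apply mul_le_mul_of_nonneg_right _ hD
            exact (hmono z.1 ⟨h0, hz.2⟩).2
  have hcontract : ContractingWith (1/2 : NNReal) Tmap := by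
    constructor
    · rw [← NNReal.coe_lt_coe]; norm_num
    · apply LipschitzWith.of_dist_le_mul
      intro W W'
      have := hTlip W W'
      simpa using this
  set W₀ : B := ContractingWith.fixedPoint Tmap hcontract with hW₀def
  have hfix : Tmap W₀ = W₀ := hcontract.fixedPoint_isFixedPt
  set w : ℝ → ℝ := ext ↑W₀ with hwdef
  have hwc : Continuous w := hex ↑W₀
  have hwb : ∀ x ∈ Icc (0:ℝ) η, a/2 ≤ w x ∧ w x ≤ 3*a/2 := hexb ↑W₀ W₀.2
  have hfixt : ∀ t : ℝ, ∀ ht : t ∈ Icc (0:ℝ) ε₀, Tr w t = w t := by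
    intro t ht
    have h1 : (Tmap W₀).1 ⟨t, ht⟩ = (W₀ : C(Icc (0:ℝ) ε₀, ℝ)) ⟨t, ht⟩ := by rw [hfix]
    have h2 : (Tmap W₀).1 ⟨t, ht⟩ = Tr w t := rfl
    rw [h2] at h1
    rw [h1, ← hexeq ↑W₀ t ht]
  -- the solution
  set vv : ℝ → ℝ := fun t => a * t - If w t with hvvdef
  have hvv0 : vv 0 = 0 := by simp only [hvvdef]; rw [hI0 w]; ring
  have hvw : ∀ t ∈ Ioc (0:ℝ) ε₀, vv t = t * w t := by
    intro t ht
    have ht0 : t ≠ 0 := ne_of_gt ht.1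
    simp only [hvvdef]
    rw [← hfixt t ⟨ht.1.le, ht.2⟩]
    simp only [hTrdef]
    field_simp
  have hIoo : ∀ t ∈ Ioc (0:ℝ) ε₀, t ∈ Ioo (0:ℝ) η :=
    fun t ht => ⟨ht.1, lt_of_le_of_lt ht.2 hε₀η⟩
  have hv1 : ∀ t ∈ Ioo (0:ℝ) η, HasDerivAt vv (a - Ff w t) t := by
    intro t ht
    have hId := ((pack w hwc hwb).2.2.2.2 t ht).2
    have h1 : HasDerivAt (fun s : ℝ => a * s) a t := by
      simpa using (hasDerivAt_id t).const_mul a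
    exact h1.sub hId
  have hdvv : ∀ t ∈ Ioo (0:ℝ) η, deriv vv t = a - Ff w t := fun t ht => (hv1 t ht).deriv
  have hv2 : ∀ t ∈ Ioo (0:ℝ) η, HasDerivAt (deriv vv) (-(Gf w t)) t := by
    intro t ht
    have hF := ((pack w hwc hwb).2.2.2.2 t ht).1
    have base : HasDerivAt (fun s : ℝ => a - Ff w s) (-(Gf w t)) t := by
      have := (hasDerivAt_const t a).sub hF; rw [zero_sub] at this; exact this
    apply base.congr_of_eventuallyEq
    filter_upwards [isOpen_Ioo.mem_nhds ht] with s hs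
    exact hdvv s hs
  have hvpos : ∀ t ∈ Ioc (0:ℝ) ε₀, 0 < vv t := by
    intro t ht
    rw [hvw t ht]
    have h1 := (hwb t ⟨ht.1.le, le_trans ht.2 hε₀η.le⟩).1
    have ha2 : (0:ℝ) < a/2 := by positivity
    exact mul_pos ht.1 (lt_of_lt_of_le ha2 h1)
  refine ⟨ε₀, hε₀pos, hε₀R₁, vv, ?_, hvv0, ?_, ?_, ?_, w, ⟨?_, ?_, ?_, ?_⟩, ?_, ?_⟩
  · -- continuity of vv
    rw [hvvdef]
    exact (continuous_const.mul continuous_id).continuousOn.sub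
      ((pack w hwc hwb).2.2.2.1.mono (Icc_subset_Icc_right hε₀η.le))
  · -- the limit of vv t / t
    have hw0a : w 0 = a := by rw [← hfixt 0 ⟨le_refl 0, hε₀pos.le⟩]; exact hTr0 w
    have h1 : Tendsto w (𝓝[>] (0:ℝ)) (𝓝 a) := by
      have h2 := (hwc.tendsto 0).mono_left (nhdsWithin_le_nhds (s := Ioi (0:ℝ)))
      rwa [hw0a] at h2
    apply Filter.Tendsto.congr' _ h1
    filter_upwards [Ioo_mem_nhdsGT_of_mem (left_mem_Ico.mpr hε₀pos)] with t ht
    rw [hvw t ⟨ht.1, ht.2.le⟩, mul_comm, mul_div_assoc, div_self (ne_of_gt ht.1), mul_one]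
  · -- the ODE
    intro t ht
    have h3 := hIoo t ht
    refine ⟨(hv1 t h3).differentiableAt, (hv2 t h3).differentiableAt, ?_⟩
    rw [(hv2 t h3).deriv]
    have hvt := hvw t ht
    have hp := hvpos t ht
    have hfv : f (vv t) = (vv t) ^ (-q) + g₁ (vv t) := by
      rw [hH2 _ (ne_of_gt hp), abs_of_pos hp]
      have h4 : (vv t) ^ (-q) = vv t / vv t ^ (q+1) := by
        rw [show -q = 1 - (q+1) by ring, Real.rpow_sub hp, Real.rpow_one]
      rw [h4]
    rw [hfv]
    simp only [hGfdef]
    rw [hvt]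
    ring
  · -- the linear bounds
    intro t ht
    rcases eq_or_lt_of_le ht.1 with h0 | h0
    · rw [← h0, hvv0]
      norm_num
    · have hvt := hvw t ⟨h0, ht.2⟩
      obtain ⟨hb1, hb2⟩ := hwb t ⟨ht.1, le_trans ht.2 hε₀η.le⟩
      rw [hvt]
      constructor <;> nlinarith
  · exact hwc.continuousOn
  · rw [← hfixt 0 ⟨le_refl 0, hε₀pos.le⟩]; exact hTr0 w
  · intro t ht
    obtain ⟨hb1, hb2⟩ := hwb t ⟨ht.1, le_trans ht.2 hε₀η.le⟩
    rw [abs_le]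
    constructor <;> linarith
  · intro t ht
    have h1 := (hfixt t ⟨ht.1.le, ht.2⟩).symm
    simp only [hTrdef, hIfdef, hFfdef, hGfdef] at h1
    exact h1
  · -- uniqueness
    rintro w' ⟨hw'c, hw'0, hw'ball, hw'eq⟩ t ht
    set W' : C(Icc (0:ℝ) ε₀, ℝ) := ⟨(Icc (0:ℝ) ε₀).restrict w', hw'c.restrict⟩ with hW'def
    have hW'B : W' ∈ B := by
      show W' ∈ Metric.closedBall ca (a/2)
      rw [Metric.mem_closedBall, ContinuousMap.dist_le (by positivity)]
      intro z
      have h1 := hw'ball z.1 z.2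
      rw [Real.dist_eq]; exact h1
    have hexW' : ∀ x ∈ Icc (0:ℝ) ε₀, ext W' x = w' x := by
      intro x hx
      rw [hexeq W' x hx]
      rfl
    have hFeq : ∀ s : ℝ, 0 < s → s ≤ ε₀ → Ff (ext W') s = Ff w' s := by
      intro s hs hsε
      simp only [hFfdef]
      apply setIntegral_congr_fun measurableSet_Ioo
      intro x hx
      simp only [hGfdef]
      rw [hexW' x ⟨hx.1.le, le_trans hx.2.le hsε⟩]
    have hIeq : ∀ u : ℝ, 0 < u → u ≤ ε₀ → If (ext W') u = If w' u := by
      intro u hu huε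
      simp only [hIfdef]
      apply setIntegral_congr_fun measurableSet_Ioo
      intro s hs
      exact hFeq s hs.1 (le_trans hs.2.le huε)
    have hfixW' : Tmap ⟨W', hW'B⟩ = ⟨W', hW'B⟩ := by
      apply Subtype.ext
      apply ContinuousMap.ext
      intro z
      show Tr (ext W') z.1 = w' z.1
      rcases eq_or_lt_of_le z.2.1 with h0 | h0
      · rw [← h0, hTr0, ← hw'0]
      · have h1 := hw'eq z.1 ⟨h0, z.2.2⟩
        simp only [hTrdef]
        rw [hIeq z.1 h0 z.2.2]
        simp only [hIfdef, hFfdef, hGfdef]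
        exact h1.symm
    have huniq : (⟨W', hW'B⟩ : B) = W₀ := by
      rw [hW₀def]
      exact hcontract.fixedPoint_unique hfixW'
    calc w' t = W' ⟨t, ht⟩ := rfl
      _ = (W₀ : C(Icc (0:ℝ) ε₀, ℝ)) ⟨t, ht⟩ :=
        congrArg (fun V : B => (V : C(Icc (0:ℝ) ε₀, ℝ)) ⟨t, ht⟩) huniq
      _ = w t := (hexeq ↑W₀ t ht).symm
  · -- vv = t * w
    intro t ht
    rcases eq_or_lt_of_le ht.1 with h0 | h0
    · rw [← h0, hvv0]; ring
    · exact hvw t ⟨h0, ht.2⟩
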